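/- Let m ≥ 1, α ∈ (0,1), and let (u_i, ũ_i)_{i=1}^m be reals with u_i ≠ ũ_i for all i. Form ξ_i, s_i, the conformal threshold τ and selection set S at level α, and define E_i = m·ξ_i·1{s_i ≤ τ} / (1 + Σ_{j=1}^m (1 − ξ_j)·1{s_j ≤ τ}) when τ > −∞, and E_i = 0 for all i when τ = −∞. Then the rejection set of the eBH procedure at level α applied to (E_1,…,E_m) equals S, i.e. R_eBH = {i : u_i ≤ min(ũ_i, τ)}. -/

import Mathlib

open MeasureTheory Finset

/-- Indicator `ξ_i = 1{u_i ≤ ũ_i}` (as a real number). -/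
noncomputable def xiv {m : ℕ} (u ut : Fin m → ℝ) (i : Fin m) : ℝ :=
  if u i ≤ ut i then 1 else 0

/-- `s_i = min(u_i, ũ_i)`. -/
noncomputable def sv {m : ℕ} (u ut : Fin m → ℝ) (i : Fin m) : ℝ :=
  min (u i) (ut i)

/-- `Q(t) = (1 + Σ (1 − ξ_i)·1{s_i ≤ t}) / max(Σ ξ_i·1{s_i ≤ t}, 1)`. -/
noncomputable def Qfun {m : ℕ} (u ut : Fin m → ℝ) (t : ℝ) : ℝ :=
  (1 + ∑ i, (1 - xiv u ut i) * (if sv u ut i ≤ t then 1 else 0)) /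
    max (∑ i, xiv u ut i * (if sv u ut i ≤ t then 1 else 0)) 1

/-- The set `{t ∈ {u_1,…,u_m, ũ_1,…,ũ_m} : Q(t) ≤ α}`; `τ` is its max,
`τ = −∞` when it is empty. -/
noncomputable def thrCand {m : ℕ} (u ut : Fin m → ℝ) (α : ℝ) : Finset ℝ :=
  (Finset.univ.image u ∪ Finset.univ.image ut).filter (fun t => Qfun u ut t ≤ α)

/-- The selection set `S = {i : u_i ≤ min(ũ_i, τ)}`, with `S = ∅` when `τ = −∞`. -/
noncomputable def selSet {m : ℕ} (u ut : Fin m → ℝ) (α : ℝ) : Finset (Fin m) :=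
  if h : (thrCand u ut α).Nonempty then
    Finset.univ.filter (fun i => u i ≤ min (ut i) ((thrCand u ut α).max' h))
  else ∅

/-- `E_i = m·ξ_i·1{s_i ≤ τ} / (1 + Σ_j (1 − ξ_j)·1{s_j ≤ τ})` when `τ > −∞`,
and `E_i = 0` when `τ = −∞`. -/
noncomputable def evar {m : ℕ} (u ut : Fin m → ℝ) (α : ℝ) (i : Fin m) : ℝ :=
  if h : (thrCand u ut α).Nonempty then
    (m : ℝ) * xiv u ut i * (if sv u ut i ≤ (thrCand u ut α).max' h then 1 else 0) /
      (1 + ∑ j, (1 - xiv u ut j) * (if sv u ut j ≤ (thrCand u ut α).max' h then 1 else 0))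
  else 0

/-- `E_(k)`: the `k`-th largest value (1-indexed) among `E_1, …, E_m`. -/
noncomputable def orderStat {m : ℕ} (E : Fin m → ℝ) (k : ℕ) : ℝ :=
  ((List.ofFn E).mergeSort (fun a b => decide (b ≤ a))).getD (k - 1) 0

/-- The set `{k ∈ {1,…,m} : E_(k) ≥ m/(α·k)}`; `k̂` is its max. -/
noncomputable def kHatSet {m : ℕ} (E : Fin m → ℝ) (α : ℝ) : Finset ℕ :=
  (Finset.Icc 1 m).filter (fun k => (m : ℝ) / (α * k) ≤ orderStat E k)

/-- The eBH rejection set `R_eBH = {i : E_i ≥ m/(α·k̂)}`, empty when no `k` qualifies. -/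
noncomputable def eBHRej {m : ℕ} (E : Fin m → ℝ) (α : ℝ) : Finset (Fin m) :=
  if h : (kHatSet E α).Nonempty then
    Finset.univ.filter (fun i => (m : ℝ) / (α * (kHatSet E α).max' h) ≤ E i)
  else ∅

lemma getD_all_eq {l : List ℝ} {d : ℝ} (h : ∀ x ∈ l, x = d) (n : ℕ) : l.getD n d = d := by
  rw [List.getD_eq_getElem?_getD]
  cases hl : l[n]? with
  | none => rfl
  | some x => simpa using h x (List.mem_of_getElem? hl)

lemma card_filter_eq_countP {m : ℕ} (q : Fin m → Prop) [DecidablePred q] :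
    (Finset.univ.filter q).card = List.countP (fun i => decide (q i)) (List.finRange m) := by
  rw [Fin.univ_def, Finset.filter, Finset.card]
  simp [Multiset.filter_coe, List.countP_eq_length_filter]

lemma mergeSort_eq {m : ℕ} (E : Fin m → ℝ) (c : ℝ) (hc : 0 < c) (S : Finset (Fin m))
    (hE : ∀ i, E i = if i ∈ S then c else 0) :
    (List.ofFn E).mergeSort (fun a b => decide (b ≤ a)) =
      List.replicate S.card c ++ List.replicate (m - S.card) 0 := by
  set l := List.ofFn E with hl
  set p : ℝ → Bool := fun x => decide (x = c) with hp
  have hScard : S.card = (Finset.univ.filter (fun i => E i = c)).card := by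
    congr 1
    ext i
    rw [Finset.mem_filter, hE]
    by_cases h : i ∈ S <;> simp [h, hc.ne', hc.ne]
  have hcount : List.countP p l = S.card := by
    rw [hl, List.ofFn_eq_map, List.countP_map, hScard,
      card_filter_eq_countP (fun i => E i = c)]
    rfl
  have hlen : l.length = m := by simp [hl]
  have hmem0 : ∀ b ∈ l, b ≠ c → b = 0 := by
    intro b hb hbc
    rw [hl, List.mem_ofFn] at hb
    obtain ⟨i, hi⟩ := hb
    rw [hE] at hi
    by_cases h : i ∈ S
    · rw [if_pos h] at hi; exact absurd hi.symm hbc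
    · rw [if_neg h] at hi; exact hi.symm
  have hf1 : l.filter p = List.replicate S.card c := by
    rw [List.eq_replicate_iff]
    refine ⟨by rw [← List.countP_eq_length_filter, hcount], ?_⟩
    intro b hb
    simpa [hp] using List.of_mem_filter hb
  have hf2 : l.filter (fun x => !p x) = List.replicate (m - S.card) 0 := by
    rw [List.eq_replicate_iff]
    constructor
    · have h1 := List.length_eq_countP_add_countP p (l := l)
      have h2 : (fun a => decide (¬ p a = true)) = fun x => !p x := by
        funext a; cases hpa : p a <;> simp [hpa]
      rw [h2] at h1
      rw [← List.countP_eq_length_filter]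
      omega
    · intro b hb
      have h1 : ¬ (b = c) := by simpa [hp] using List.of_mem_filter hb
      exact hmem0 b (List.mem_of_mem_filter hb) h1
  have hperm : (l.mergeSort (fun a b => decide (b ≤ a))).Perm
      (List.replicate S.card c ++ List.replicate (m - S.card) 0) := by
    refine (List.mergeSort_perm l _).trans ?_
    rw [← hf1, ← hf2]
    exact (List.filter_append_perm p l).symm
  have hsorted1 : List.Pairwise (fun a b : ℝ => b ≤ a) (l.mergeSort (fun a b => decide (b ≤ a))) := by
    have := List.pairwise_mergeSort (le := fun a b : ℝ => decide (b ≤ a))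
      (fun a b c hab hbc => by
        simp only [decide_eq_true_eq] at *
        exact le_trans hbc hab)
      (fun a b => by simpa using le_total b a) l
    simpa using this
  have hsorted2 : List.Pairwise (fun a b : ℝ => b ≤ a)
      (List.replicate S.card c ++ List.replicate (m - S.card) 0) := by
    rw [List.pairwise_append]
    refine ⟨List.pairwise_replicate.mpr (Or.inr le_rfl),
      List.pairwise_replicate.mpr (Or.inr le_rfl), ?_⟩
    intro a ha b hb
    rw [List.eq_of_mem_replicate ha, List.eq_of_mem_replicate hb]
    exact hc.le
  haveI : IsAntisymm ℝ (fun a b => b ≤ a) := ⟨fun a b h1 h2 => le_antisymm h2 h1⟩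
  exact List.Perm.eq_of_pairwise (fun a b _ _ h1 h2 => le_antisymm h2 h1) hsorted1 hsorted2 hperm

lemma orderStat_eq {m : ℕ} (E : Fin m → ℝ) (c : ℝ) (hc : 0 < c) (S : Finset (Fin m))
    (hE : ∀ i, E i = if i ∈ S then c else 0) (k : ℕ) (hk : 1 ≤ k) :
    orderStat E k = if k ≤ S.card then c else 0 := by
  rw [orderStat, mergeSort_eq E c hc S hE]
  by_cases h : k ≤ S.card
  · rw [if_pos h, List.getD_append _ _ _ _ (by simp; omega)]
    rw [List.getD_eq_getElem?_getD, List.getElem?_replicate, if_pos (by omega)]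
    rfl
  · rw [if_neg h]
    rw [List.getD_eq_getElem?_getD, List.getElem?_append_right (by simp; omega),
      List.getElem?_replicate]
    split <;> rfl

lemma orderStat_zero {m : ℕ} (E : Fin m → ℝ) (hE : ∀ i, E i = 0) (k : ℕ) :
    orderStat E k = 0 := by
  refine getD_all_eq ?_ _
  intro x hx
  have := ((List.mergeSort_perm (List.ofFn E) _).mem_iff).mp hx
  rw [List.mem_ofFn] at this
  obtain ⟨i, hi⟩ := this
  rw [hE] at hi; exact hi.symm


/-- the eBH rejection set applied to the conformal e-variables coincides
with the COIN selection set. -/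
theorem stmt1 {m : ℕ} (hm : 1 ≤ m) (α : ℝ) (hα : α ∈ Set.Ioo (0 : ℝ) 1)
    (u ut : Fin m → ℝ) (hne : ∀ i, u i ≠ ut i) :
    eBHRej (evar u ut α) α = selSet u ut α := by
  obtain ⟨hα0, hα1⟩ := hα
  have hm0 : (0:ℝ) < m := by exact_mod_cast hm
  by_cases h : (thrCand u ut α).Nonempty
  · -- nonempty case
    set τ := (thrCand u ut α).max' h with hτ
    set S := Finset.univ.filter (fun i => u i ≤ min (ut i) τ) with hS
    set V := ∑ j, (1 - xiv u ut j) * (if sv u ut j ≤ τ then (1:ℝ) else 0) with hV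
    have hind : ∀ i, xiv u ut i * (if sv u ut i ≤ τ then (1:ℝ) else 0)
        = if u i ≤ min (ut i) τ then (1:ℝ) else 0 := by
      intro i
      rw [xiv, sv]
      by_cases h1 : u i ≤ ut i
      · rw [if_pos h1, min_eq_left h1, one_mul]
        by_cases h2 : u i ≤ τ
        · rw [if_pos h2, if_pos (le_min h1 h2)]
        · rw [if_neg h2, if_neg (fun hc => h2 (le_trans hc (min_le_right _ _)))]
      · rw [if_neg h1, zero_mul,
          if_neg (fun hc => h1 (le_trans hc (min_le_left _ _)))]
    have hVnn : 0 ≤ V := by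
      apply Finset.sum_nonneg
      intro j _
      rw [xiv]
      split <;> split <;> norm_num
    have hV1 : (0:ℝ) < 1 + V := by linarith
    have hRsum : ((S.card : ℝ)) = ∑ i, xiv u ut i * (if sv u ut i ≤ τ then (1:ℝ) else 0) := by
      simp_rw [hind]
      rw [Finset.sum_boole, hS]
    have hQ : Qfun u ut τ ≤ α := by
      have := Finset.max'_mem _ h
      simp only [thrCand, Finset.mem_filter] at this
      exact this.2
    rw [Qfun, ← hRsum, ← hV] at hQ
    have hmax1 : (0:ℝ) < max ((S.card : ℝ)) 1 := lt_of_lt_of_le one_pos (le_max_right _ _)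
    have hQ' : 1 + V ≤ α * max ((S.card : ℝ)) 1 := by
      rw [div_le_iff₀ hmax1] at hQ
      linarith [hQ]
    have hR1 : 1 ≤ S.card := by
      by_contra hc
      have : S.card = 0 := by omega
      rw [this] at hQ'
      simp at hQ'
      linarith
    have hR1' : (1:ℝ) ≤ (S.card : ℝ) := by exact_mod_cast hR1
    have hkey : 1 + V ≤ α * S.card := by
      rwa [max_eq_left hR1'] at hQ'
    have hRm : S.card ≤ m := by
      calc S.card ≤ Finset.univ.card := Finset.card_filter_le _ _
      _ = m := by simp
    set c := (m : ℝ) / (1 + V) with hc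
    have hc0 : 0 < c := div_pos hm0 hV1
    have hEe : ∀ i, evar u ut α i = if i ∈ S then c else 0 := by
      intro i
      rw [evar, dif_pos h, ← hτ, mul_assoc, hind i, ← hV]
      by_cases h1 : u i ≤ min (ut i) τ
      · rw [if_pos h1, if_pos (by rw [hS, Finset.mem_filter]; exact ⟨Finset.mem_univ i, h1⟩),
          mul_one]
      · have h2 : i ∉ S := fun hc' => h1 (Finset.mem_filter.mp hc').2
        rw [if_neg h1, if_neg h2, mul_zero, zero_div]
    have hαR : (0:ℝ) < α * S.card := by positivity
    have hdiv : (m:ℝ) / (α * S.card) ≤ c :=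
      div_le_div_of_nonneg_left hm0.le hV1 hkey
    have hScard_mem : S.card ∈ kHatSet (evar u ut α) α := by
      rw [kHatSet, Finset.mem_filter, Finset.mem_Icc]
      refine ⟨⟨hR1, hRm⟩, ?_⟩
      rw [orderStat_eq _ c hc0 S hEe _ hR1, if_pos le_rfl]
      exact hdiv
    have hkne : (kHatSet (evar u ut α) α).Nonempty := ⟨_, hScard_mem⟩
    have hkmax : (kHatSet (evar u ut α) α).max' hkne = S.card := by
      apply le_antisymm
      · apply Finset.max'_le
        intro k hk
        rw [kHatSet, Finset.mem_filter, Finset.mem_Icc] at hk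
        obtain ⟨⟨hk1, hkm⟩, hko⟩ := hk
        by_contra hc'
        push_neg at hc'
        rw [orderStat_eq _ c hc0 S hEe _ hk1, if_neg (by omega)] at hko
        have : (0:ℝ) < (m:ℝ) / (α * k) := by
          apply div_pos hm0
          have : (0:ℝ) < (k:ℝ) := by exact_mod_cast hk1
          positivity
        linarith
      · exact Finset.le_max' _ _ hScard_mem
    rw [eBHRej, dif_pos hkne, hkmax, selSet, dif_pos h]
    ext i
    rw [Finset.mem_filter, Finset.mem_filter]
    constructor
    · rintro ⟨_, hi⟩
      refine ⟨Finset.mem_univ i, ?_⟩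
      by_contra hc'
      have hiS : i ∉ S := by rw [hS, Finset.mem_filter]; tauto
      rw [hEe i, if_neg hiS] at hi
      have : (0:ℝ) < (m:ℝ) / (α * S.card) := div_pos hm0 hαR
      linarith
    · rintro ⟨_, hi⟩
      have hiS : i ∈ S := by rw [hS, Finset.mem_filter]; exact ⟨Finset.mem_univ i, hi⟩
      refine ⟨Finset.mem_univ i, ?_⟩
      rw [hEe i, if_pos hiS]
      exact hdiv
  · -- empty case
    have hE : ∀ i, evar u ut α i = 0 := fun i => by rw [evar, dif_neg h]
    have hk : kHatSet (evar u ut α) α = ∅ := by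
      rw [kHatSet, Finset.filter_eq_empty_iff]
      intro k hk
      rw [Finset.mem_Icc] at hk
      rw [orderStat_zero _ hE]
      push_neg
      apply div_pos hm0
      have : (0:ℝ) < (k:ℝ) := by exact_mod_cast hk.1
      positivity
    rw [eBHRej, dif_neg (by rw [hk]; exact Finset.not_nonempty_empty), selSet, dif_neg h]
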